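/- Let (η_k)_{k∈ℕ} be positive real numbers and (v_k)_{k∈ℕ} ⊂ ℝ³ vectors such that Σ_k (v_k · c)² ≤ θ|c|² for every c ∈ ℝ³, where 0 ≤ θ < 1. Let z ∈ ℝ be a real number with d := inf_k |η_k − z| > 0. Then the series defining the matrix D(z) := I + Σ_k (η_k²/(η_k − z)² − 1)·v_k v_kᵀ converges absolutely, and D(z) is positive definite with the uniform lower bound ⟨D(z)c, c⟩ ≥ (1 − θ)·‖c‖² for every c ∈ ℂ³. (The matrix D(z) is the derivative B′(z) of the Zhikov function at the real point z; its positive definiteness implies that the eigenvalue branches of B(z) are strictly increasing on every interval of analyticity on the real line.) -/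

import Mathlib

open Finset

/-- **Positive definiteness of the derivative of the Zhikov function on the real line.**
Given positive reals `η_k` and vectors `v_k ∈ ℝ³` with `Σ_k (v_k·c)² ≤ θ|c|²` for all
real `c` (with `0 ≤ θ < 1`), and a real `z` with `inf_k |η_k − z| ≥ d > 0`, the series
defining `D(z) := I + Σ_k (η_k²/(η_k − z)² − 1)·v_k v_kᵀ` converges absolutely and
`⟨D(z)c, c⟩ ≥ (1 − θ)‖c‖²` for every `c ∈ ℂ³`. -/
theorem zhikov_derivative_positive_definite
    (η : ℕ → ℝ) (hη : ∀ k, 0 < η k)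
    (v : ℕ → Fin 3 → ℝ) (θ : ℝ) (hθ0 : 0 ≤ θ) (hθ1 : θ < 1)
    (hsummable : ∀ c : Fin 3 → ℝ, Summable fun k => (∑ i, v k i * c i) ^ 2)
    (hbound : ∀ c : Fin 3 → ℝ, (∑' k, (∑ i, v k i * c i) ^ 2) ≤ θ * ∑ i, (c i) ^ 2)
    (z d : ℝ) (hd : 0 < d) (hdist : ∀ k, d ≤ |η k - z|) :
    (∀ i j, Summable fun k => |((η k) ^ 2 / (η k - z) ^ 2 - 1) * v k i * v k j|) ∧
    ∀ c : Fin 3 → ℂ,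
      (1 - θ) * (∑ i, ‖c i‖ ^ 2) ≤
        (∑ i, ∑ j, (((if i = j then (1 : ℝ) else 0) +
            ∑' k, ((η k) ^ 2 / (η k - z) ^ 2 - 1) * v k i * v k j : ℝ) : ℂ) * c j *
              (starRingEnd ℂ) (c i)).re := by
  have hdz : ∀ k, (0:ℝ) < |η k - z| := fun k => lt_of_lt_of_le hd (hdist k)
  have hne : ∀ k, η k - z ≠ 0 := fun k h => by
    have := hdz k; rw [h, abs_zero] at this; exact lt_irrefl 0 this
  have hdz2 : ∀ k, (0:ℝ) < (η k - z) ^ 2 := fun k => pow_pos (abs_pos.mpr (hne k)) 2 |>.trans_le (by rw [sq_abs])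
  set A : ℕ → ℝ := fun k => (η k) ^ 2 / (η k - z) ^ 2 - 1 with hAdef
  set C : ℝ := (1 + |z| / d) ^ 2 + 1 with hCdef
  have hC1 : (1:ℝ) ≤ C := by
    have : (0:ℝ) ≤ (1 + |z| / d) ^ 2 := sq_nonneg _
    simp only [hCdef]; linarith
  have hA_lb : ∀ k, -1 ≤ A k := by
    intro k
    have h1 : (0:ℝ) ≤ (η k) ^ 2 / (η k - z) ^ 2 := div_nonneg (sq_nonneg _) (sq_nonneg _)
    simp only [hAdef]; linarith
  have hA_ub : ∀ k, |A k| ≤ C := by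
    intro k
    have hq : η k / (η k - z) = 1 + z / (η k - z) := by
      field_simp [hne k]
      ring
    have hq2 : |η k / (η k - z)| ≤ 1 + |z| / d := by
      rw [hq]
      calc |1 + z / (η k - z)| ≤ |(1:ℝ)| + |z / (η k - z)| := abs_add_le _ _
        _ = 1 + |z| / |η k - z| := by rw [abs_one, abs_div]
        _ ≤ 1 + |z| / d := by
            gcongr
            exact hdist k
    have hsq : (η k) ^ 2 / (η k - z) ^ 2 = (η k / (η k - z)) ^ 2 := by
      rw [div_pow]
    have hub : (η k) ^ 2 / (η k - z) ^ 2 ≤ (1 + |z| / d) ^ 2 := by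
      rw [hsq, ← sq_abs]
      have h0 : (0:ℝ) ≤ |η k / (η k - z)| := abs_nonneg _
      nlinarith
    have hlb : (0:ℝ) ≤ (η k) ^ 2 / (η k - z) ^ 2 := div_nonneg (sq_nonneg _) (sq_nonneg _)
    rw [abs_le]
    constructor
    · simp only [hAdef]; linarith
    · simp only [hAdef, hCdef]; linarith
  -- summability of (v k i)^2
  have hvi : ∀ i, Summable fun k => (v k i) ^ 2 := by
    intro i
    have := hsummable (fun j => if j = i then 1 else 0)
    simpa [mul_ite, Finset.sum_ite_eq'] using this
  -- Part 1
  have part1 : ∀ i j, Summable fun k => |A k * v k i * v k j| := by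
    intro i j
    refine Summable.of_nonneg_of_le (fun k => abs_nonneg _)
      (fun k => ?_) (((hvi i).add (hvi j)).mul_left C)
    have h1 : |A k * v k i * v k j| = |A k| * (|v k i| * |v k j|) := by
      rw [abs_mul, abs_mul, mul_assoc]
    rw [h1]
    have h2 : |v k i| * |v k j| ≤ (v k i) ^ 2 + (v k j) ^ 2 := by
      nlinarith [sq_nonneg (|v k i| - |v k j|), sq_abs (v k i), sq_abs (v k j),
        abs_nonneg (v k i), abs_nonneg (v k j)]
    have h3 : (0:ℝ) ≤ |A k| := abs_nonneg _
    calc |A k| * (|v k i| * |v k j|) ≤ C * ((v k i) ^ 2 + (v k j) ^ 2) := by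
          apply mul_le_mul (hA_ub k) h2 (by positivity) (by linarith)
      _ = C * ((fun k => (v k i) ^ 2 + (v k j) ^ 2) k) := rfl
  have hAij : ∀ i j, Summable fun k => A k * v k i * v k j := fun i j => (part1 i j).of_abs
  -- key identity and real quadratic form bound
  have main : ∀ u : Fin 3 → ℝ,
      (1 - θ) * (∑ i, u i ^ 2) ≤
        ∑ i, ∑ j, ((if i = j then (1:ℝ) else 0) + ∑' k, A k * v k i * v k j) * (u j * u i) := by
    intro u
    set s : ℕ → ℝ := fun k => ∑ i, v k i * u i with hsdef
    have hAs : Summable fun k => A k * (s k) ^ 2 := by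
      apply Summable.of_abs
      refine Summable.of_nonneg_of_le (fun k => abs_nonneg _)
        (fun k => ?_) ((hsummable u).mul_left C)
      rw [abs_mul, abs_of_nonneg (sq_nonneg (s k))]
      exact mul_le_mul_of_nonneg_right (hA_ub k) (sq_nonneg _)
    have key : ∑ i, ∑ j, (∑' k, A k * v k i * v k j) * (u j * u i)
        = ∑' k, A k * (s k) ^ 2 := by
      have step1 : ∀ i j, (∑' k, A k * v k i * v k j) * (u j * u i)
          = ∑' k, A k * v k i * v k j * (u j * u i) := fun i j => tsum_mul_right.symm
      have step2 : ∀ i : Fin 3, ∑ j, ∑' k, A k * v k i * v k j * (u j * u i)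
          = ∑' k, ∑ j, A k * v k i * v k j * (u j * u i) :=
        fun i => (Summable.tsum_finsetSum fun j _ => (hAij i j).mul_right _).symm
      have step3 : ∑ i, ∑' k, ∑ j, A k * v k i * v k j * (u j * u i)
          = ∑' k, ∑ i, ∑ j, A k * v k i * v k j * (u j * u i) := by
        refine (Summable.tsum_finsetSum fun i _ => ?_).symm
        exact summable_sum (fun j _ => (hAij i j).mul_right _)
      calc ∑ i, ∑ j, (∑' k, A k * v k i * v k j) * (u j * u i)
          = ∑ i, ∑ j, ∑' k, A k * v k i * v k j * (u j * u i) := by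
            exact Finset.sum_congr rfl fun i _ => Finset.sum_congr rfl fun j _ => step1 i j
        _ = ∑ i, ∑' k, ∑ j, A k * v k i * v k j * (u j * u i) :=
            Finset.sum_congr rfl fun i _ => step2 i
        _ = ∑' k, ∑ i, ∑ j, A k * v k i * v k j * (u j * u i) := step3
        _ = ∑' k, A k * (s k) ^ 2 := by
            refine tsum_congr fun k => ?_
            simp only [hsdef, sq, Finset.mul_sum, Finset.sum_mul]
            refine Finset.sum_congr rfl fun i _ => Finset.sum_congr rfl fun j _ => by ring
    have hlow : -(θ * ∑ i, u i ^ 2) ≤ ∑' k, A k * (s k) ^ 2 := by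
      have h1 : ∑' k, (-(s k ^ 2)) ≤ ∑' k, A k * (s k) ^ 2 := by
        refine Summable.tsum_le_tsum (fun k => ?_) ((hsummable u).neg) hAs
        nlinarith [sq_nonneg (s k), hA_lb k]
      rw [tsum_neg] at h1
      have h2 := hbound u
      linarith
    have hδ : ∑ i, ∑ j, (if i = j then (1:ℝ) else 0) * (u j * u i) = ∑ i, u i ^ 2 := by
      simp [ite_mul, Finset.sum_ite_eq, sq]
    have hsplit : ∑ i, ∑ j, ((if i = j then (1:ℝ) else 0) + ∑' k, A k * v k i * v k j) * (u j * u i)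
        = (∑ i, ∑ j, (if i = j then (1:ℝ) else 0) * (u j * u i))
          + ∑ i, ∑ j, (∑' k, A k * v k i * v k j) * (u j * u i) := by
      rw [← Finset.sum_add_distrib]
      refine Finset.sum_congr rfl fun i _ => ?_
      rw [← Finset.sum_add_distrib]
      exact Finset.sum_congr rfl fun j _ => by ring
    rw [hsplit, hδ, key]
    linarith
  refine ⟨part1, fun c => ?_⟩
  set x : Fin 3 → ℝ := fun i => (c i).re with hx
  set y : Fin 3 → ℝ := fun i => (c i).im with hy
  have hre : (∑ i, ∑ j, (((if i = j then (1 : ℝ) else 0) +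
            ∑' k, A k * v k i * v k j : ℝ) : ℂ) * c j * (starRingEnd ℂ) (c i)).re
      = (∑ i, ∑ j, ((if i = j then (1:ℝ) else 0) + ∑' k, A k * v k i * v k j) * (x j * x i))
        + ∑ i, ∑ j, ((if i = j then (1:ℝ) else 0) + ∑' k, A k * v k i * v k j) * (y j * y i) := by
    rw [Complex.re_sum]
    rw [← Finset.sum_add_distrib]
    refine Finset.sum_congr rfl fun i _ => ?_
    rw [Complex.re_sum, ← Finset.sum_add_distrib]
    refine Finset.sum_congr rfl fun j _ => ?_
    simp [Complex.mul_re, Complex.ofReal_re, Complex.ofReal_im, Complex.conj_re, Complex.conj_im,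
      hx, hy]
    ring
  have hnorm : ∑ i, ‖c i‖ ^ 2 = (∑ i, x i ^ 2) + ∑ i, y i ^ 2 := by
    rw [← Finset.sum_add_distrib]
    refine Finset.sum_congr rfl fun i _ => ?_
    rw [Complex.sq_norm, Complex.normSq_apply]
    simp [hx, hy, sq]
  rw [hre, hnorm, mul_add]
  exact add_le_add (main x) (main y)
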